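/- arXiv:math/9802004 — 2 statements merged into one kernel-verified Lean document; each statement's English description precedes it below -/
import Mathlib

section
/- Let V be a complex vector space with basis e_1, …, e_d, and let x : V → V be a linear endomorphism with x(e_i) = μ_i·e_i for pairwise distinct scalars μ_1, …, μ_d ∈ ℂ. Then for every n ≥ 1, the set of n-step partial flags F = (0 = F_0 ⊆ F_1 ⊆ ⋯ ⊆ F_n = V) satisfying x(F_i) ⊆ F_i for all i is finite of cardinality n^d; it is in bijection with the set of maps φ : {1,…,d} → {1,…,n}, the flag corresponding to φ being F_j = span{e_i : φ(i) ≤ j}. -/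
section Aux
variable {V : Type*} [AddCommGroup V] [Module ℂ V] {d : ℕ}
  (e : Module.Basis (Fin d) ℂ V) (μ : Fin d → ℂ) (hμ : Function.Injective μ)
  (x : V →ₗ[ℂ] V) (hx : ∀ i, x (e i) = μ i • e i)

lemma repr_apply_x (hx' : ∀ i, x (e i) = μ i • e i) (v : V) (k : Fin d) :
    e.repr (x v) k = μ k * e.repr v k := by
  conv_lhs => rw [← e.sum_repr v]
  rw [map_sum, map_sum]
  simp only [map_smul, hx', Module.Basis.repr_self, Finsupp.smul_apply, Finset.sum_apply',
    Finsupp.single_apply, smul_eq_mul]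
  rw [Finset.sum_eq_single k]
  · simp [mul_comm]
  · intro b _ hb
    simp [hb]
  · simp

include hμ hx in
lemma eigvec_mem (W : Submodule ℂ V) (hW : Submodule.map x W ≤ W) :
    ∀ (m : ℕ) (v : V), v ∈ W → (e.repr v).support.card ≤ m →
      ∀ i, e.repr v i ≠ 0 → e i ∈ W := by
  intro m
  induction m with
  | zero =>
    intro v _ hc i hi
    rw [Nat.le_zero, Finset.card_eq_zero] at hc
    exact absurd (Finsupp.mem_support_iff.mpr hi) (by simp [hc])
  | succ m IH =>
    intro v hv hc i hi
    by_cases hj : ∃ j, j ≠ i ∧ e.repr v j ≠ 0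
    · obtain ⟨j, hji, hj0⟩ := hj
      set w := μ j • v - x v with hw
      have hwW : w ∈ W := sub_mem (W.smul_mem _ hv) (hW ⟨v, hv, rfl⟩)
      have hwr : ∀ k, e.repr w k = (μ j - μ k) * e.repr v k := by
        intro k
        simp [hw, repr_apply_x e μ x hx, sub_mul, mul_comm]
      have hsupp : (e.repr w).support ⊆ (e.repr v).support.erase j := by
        intro k hk
        rw [Finsupp.mem_support_iff, hwr] at hk
        rw [Finset.mem_erase, Finsupp.mem_support_iff]
        refine ⟨?_, fun h => hk (by simp [h])⟩
        rintro rfl; simp at hk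
      have hcard : (e.repr w).support.card ≤ m := by
        have h1 : j ∈ (e.repr v).support := Finsupp.mem_support_iff.mpr hj0
        have := Finset.card_le_card hsupp
        have := Finset.card_erase_of_mem h1
        omega
      refine IH w hwW hcard i ?_
      rw [hwr]
      exact mul_ne_zero (sub_ne_zero.mpr fun h => hji (hμ h)) hi
    · push_neg at hj
      have hv' : v = e.repr v i • e i := by
        conv_lhs => rw [← e.sum_repr v]
        rw [Finset.sum_eq_single i]
        · intro b _ hb; rw [hj b hb, zero_smul]
        · simp
      have h2 := congrArg (fun z => (e.repr v i)⁻¹ • z) hv'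
      simp only [smul_smul, inv_mul_cancel₀ hi, one_smul] at h2
      rw [← h2]; exact W.smul_mem _ hv

include hμ hx in
lemma invariant_eq_span (W : Submodule ℂ V) (hW : Submodule.map x W ≤ W) :
    W = Submodule.span ℂ (e '' {i | e i ∈ W}) := by
  apply le_antisymm
  · intro v hv
    rw [← e.sum_repr v]
    refine Submodule.sum_mem _ fun i _ => ?_
    by_cases h : e.repr v i = 0
    · rw [h, zero_smul]; exact zero_mem _
    · exact Submodule.smul_mem _ _ (Submodule.subset_span
        ⟨i, eigvec_mem e μ hμ x hx W hW _ v hv le_rfl i h, rfl⟩)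
  · rw [Submodule.span_le]
    rintro _ ⟨i, hi, rfl⟩
    exact hi

end Aux

/-- The `n`-step partial flags `0 = F_0 ⊆ F_1 ⊆ ⋯ ⊆ F_n = V` that are invariant
under a fixed endomorphism `x` (i.e. `x (F_j) ⊆ F_j` for all `j`). -/
def InvariantPartialFlags (V : Type*) [AddCommGroup V] [Module ℂ V]
    (n : ℕ) (x : V →ₗ[ℂ] V) : Type _ :=
  {F : Fin (n + 1) → Submodule ℂ V //
    Monotone F ∧ F 0 = ⊥ ∧ F (Fin.last n) = ⊤ ∧
    ∀ j : Fin (n + 1), Submodule.map x (F j) ≤ F j}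


/-- Section 10: for a regular semisimple operator `x` (diagonal in the basis
`e_1, …, e_d` with pairwise distinct eigenvalues), the set of `x`-invariant
`n`-step partial flags is in bijection with the maps `φ : {1,…,d} → {1,…,n}`
(the flag corresponding to `φ` being `F_j = span{e_i : φ(i) ≤ j}`); in
particular it is finite of cardinality `n^d`. -/
theorem invariant_flags_of_regular_semisimple
    (V : Type*) [AddCommGroup V] [Module ℂ V] (d : ℕ)
    (e : Module.Basis (Fin d) ℂ V) (μ : Fin d → ℂ) (hμ : Function.Injective μ)
    (x : V →ₗ[ℂ] V) (hx : ∀ i, x (e i) = μ i • e i)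
    (n : ℕ) (hn : 1 ≤ n) :
    ∃ bij : (Fin d → Fin n) ≃ InvariantPartialFlags V n x,
      (∀ (φ : Fin d → Fin n) (j : Fin (n + 1)),
        (bij φ).1 j = Submodule.span ℂ (e '' {i : Fin d | (φ i : ℕ) < (j : ℕ)})) ∧
      Nat.card (InvariantPartialFlags V n x) = n ^ d := by
  classical
  set f : (Fin d → Fin n) → InvariantPartialFlags V n x := fun φ =>
    ⟨fun j => Submodule.span ℂ (e '' {i : Fin d | (φ i : ℕ) < (j : ℕ)}),
      by
        intro j j' hjj'
        apply Submodule.span_mono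
        apply Set.image_mono
        intro i hi
        exact lt_of_lt_of_le hi (Fin.le_def.mp hjj'),
      by simp,
      by
        show Submodule.span ℂ
          (e '' {i : Fin d | (φ i : ℕ) < ((Fin.last n : Fin (n+1)) : ℕ)}) = ⊤
        have hu : {i : Fin d | (φ i : ℕ) < ((Fin.last n : Fin (n+1)) : ℕ)} = Set.univ := by
          ext i; simpa using (φ i).isLt
        rw [hu, Set.image_univ, e.span_eq],
      fun j => by
        rw [Submodule.map_span_le]
        rintro _ ⟨i, hi, rfl⟩
        rw [hx]
        exact Submodule.smul_mem _ _ (Submodule.subset_span ⟨i, hi, rfl⟩)⟩ with hf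
  have hinj : Function.Injective f := by
    intro φ φ' h
    funext i
    have key : ∀ (ψ ψ' : Fin d → Fin n), f ψ = f ψ' → (ψ' i : ℕ) ≤ ψ i := by
      intro ψ ψ' hh
      have h1 : e i ∈ (f ψ).1 ⟨(ψ i : ℕ) + 1, by omega⟩ :=
        Submodule.subset_span ⟨i, Nat.lt_succ_self _, rfl⟩
      rw [hh] at h1
      have h3 : i ∈ ((e.repr (e i)).support : Set (Fin d)) := by simp
      have h4 := (e.mem_span_image.mp h1) h3
      exact Nat.lt_succ_iff.mp h4
    exact Fin.ext (le_antisymm (key φ' φ h.symm) (key φ φ' h))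
  have hsurj : Function.Surjective f := by
    rintro ⟨F, hmono, h0, hlast, hinv⟩
    have hQ : ∀ i : Fin d, ∃ m : ℕ, ∃ h : m < n + 1, e i ∈ F ⟨m, h⟩ := by
      intro i
      exact ⟨n, by omega, by rw [show (⟨n, by omega⟩ : Fin (n+1)) = Fin.last n from rfl, hlast]; trivial⟩
    set N : Fin d → ℕ := fun i => Nat.find (hQ i) with hN
    have hNspec : ∀ i, ∃ h : N i < n + 1, e i ∈ F ⟨N i, h⟩ := fun i => Nat.find_spec (hQ i)
    have hNpos : ∀ i, 1 ≤ N i := by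
      intro i
      by_contra h
      obtain ⟨hlt, hmem⟩ := hNspec i
      have hz : (⟨N i, hlt⟩ : Fin (n+1)) = 0 := Fin.ext (by simp; omega)
      rw [hz, h0] at hmem
      exact e.ne_zero i (by simpa using hmem)
    have hNlt : ∀ i, N i - 1 < n := by
      intro i
      have := (hNspec i).1
      have := hNpos i
      by_contra h
      -- N i ≤ n always; need N i - 1 < n i.e. N i < n + 1
      omega
    refine ⟨fun i => ⟨N i - 1, hNlt i⟩, ?_⟩
    have hset : ∀ j : Fin (n + 1), {i : Fin d | N i - 1 < (j : ℕ)} = {i | e i ∈ F j} := by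
      intro j
      ext i
      simp only [Set.mem_setOf_eq]
      constructor
      · intro h
        have hle : N i ≤ (j : ℕ) := by have := hNpos i; omega
        obtain ⟨hlt, hmem⟩ := hNspec i
        exact hmono (show (⟨N i, hlt⟩ : Fin (n+1)) ≤ j from hle) hmem
      · intro h
        have : N i ≤ (j : ℕ) := Nat.find_min' (hQ i) ⟨j.isLt, by simpa using h⟩
        have := hNpos i; omega
    apply Subtype.ext
    funext j
    show Submodule.span ℂ (e '' {i : Fin d | N i - 1 < (j : ℕ)}) = F j
    rw [hset j]
    exact (invariant_eq_span e μ hμ x hx (F j) (hinv j)).symm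
  refine ⟨Equiv.ofBijective f ⟨hinj, hsurj⟩, fun φ j => rfl, ?_⟩
  rw [Nat.card_congr (Equiv.ofBijective f ⟨hinj, hsurj⟩).symm]
  simp [Nat.card_eq_fintype_card]
end

section
/- (Quadratic relation for the Demazure–Lusztig operator.) Let k = ℤ[q, q^{−1}] be the ring of Laurent polynomials, L an additive abelian group, α ∈ L, and c : L →+ ℤ with c(α) = 2; set s(λ) = λ − c(λ)·α and A = AddMonoidAlgebra k L. Assume Y_α − 1 is not a zero divisor in A. Let T : A → A be a k-linear map satisfying, for every λ ∈ L, (Y_α − 1)·T(Y_λ) = (Y_λ − Y_{s(λ)}) − q·(Y_λ − Y_{s(λ)+α}). Then T satisfies the Iwahori–Hecke quadratic relation (T + id) ∘ (T − q·id) = 0, i.e. T ∘ T = (q − 1)·T + q·id. -/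
/-- Quadratic relation for the Demazure–Lusztig operator (Section 11).  Let
`k = ℤ[q, q⁻¹]`, `L` an additive abelian group, `α ∈ L`, `c : L →+ ℤ` with
`c(α) = 2`, `s(λ) = λ − c(λ)·α`, and `A = k[L]` the group algebra with basis
`Y_λ`.  Assume `Y_α − 1` is not a zero divisor in `A`, and let `T : A → A` be a
`k`-linear map with
`(Y_α − 1)·T(Y_λ) = (Y_λ − Y_{s(λ)}) − q·(Y_λ − Y_{s(λ)+α})` for every `λ`.
Then `(T + 1)(T − q) = 0`, i.e. `T² = (q − 1)·T + q·id`. -/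
theorem demazure_lusztig_quadratic_relation
    (L : Type*) [AddCommGroup L] (α : L) (c : L →+ ℤ) (hc : c α = 2)
    (hreg : (AddMonoidAlgebra.single α (1 : LaurentPolynomial ℤ) - 1) ∈
      nonZeroDivisors (AddMonoidAlgebra (LaurentPolynomial ℤ) L))
    (T : AddMonoidAlgebra (LaurentPolynomial ℤ) L →ₗ[LaurentPolynomial ℤ]
         AddMonoidAlgebra (LaurentPolynomial ℤ) L)
    (hT : ∀ lam : L,
      (AddMonoidAlgebra.single α (1 : LaurentPolynomial ℤ) - 1) *
          T (AddMonoidAlgebra.single lam 1)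
        = (AddMonoidAlgebra.single lam (1 : LaurentPolynomial ℤ) -
              AddMonoidAlgebra.single (lam - c lam • α) 1)
          - (LaurentPolynomial.T 1 : LaurentPolynomial ℤ) •
            (AddMonoidAlgebra.single lam (1 : LaurentPolynomial ℤ) -
              AddMonoidAlgebra.single (lam - c lam • α + α) 1)) :
    ∀ a : AddMonoidAlgebra (LaurentPolynomial ℤ) L,
      T (T a) = ((LaurentPolynomial.T 1 : LaurentPolynomial ℤ) - 1) • T a + (LaurentPolynomial.T 1 : LaurentPolynomial ℤ) • a := by
  classical
  set k := LaurentPolynomial ℤ with hk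
  set q : k := LaurentPolynomial.T 1 with hq
  set A := AddMonoidAlgebra k L with hA
  set Yα : A := AddMonoidAlgebra.single α 1 with hYα
  -- the reflection `s` as an additive monoid homomorphism
  let s : L →+ L :=
  { toFun := fun l => l - c l • α
    map_zero' := by simp
    map_add' := fun x y => by
      simp only [map_add, add_smul]
      abel }
  have hs : ∀ l : L, s l = l - c l • α := fun _ => rfl
  have hcs : ∀ l : L, c (s l) = - c l := by
    intro l
    rw [hs, map_sub, map_zsmul, hc, smul_eq_mul]
    ring
  -- `s` is an involution
  have hss : ∀ l : L, s (s l) = l := by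
    intro l
    rw [hs (s l), hcs, hs l, neg_smul, sub_neg_eq_add]
    abel
  have hsα : s α = -α := by
    rw [hs, hc, two_zsmul]
    abel
  -- the induced algebra involution on the group algebra
  let S : A →ₐ[k] A := AddMonoidAlgebra.mapDomainAlgHom k k s
  have hS_single : ∀ (μ : L) (r : k),
      S (AddMonoidAlgebra.single μ r) = AddMonoidAlgebra.single (s μ) r := fun μ r => by
    show AddMonoidAlgebra.mapDomain s (AddMonoidAlgebra.single μ r) = _
    exact AddMonoidAlgebra.mapDomain_single
  have hSS : ∀ x : A, S (S x) = x := by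
    have h : S.comp S = AlgHom.id k A := by
      apply AddMonoidAlgebra.algHom_ext
      intro μ
      simp only [AlgHom.coe_comp, Function.comp_apply, AlgHom.coe_id, id_eq]
      rw [hS_single, hS_single, hss μ]
      rfl
      exact Subsingleton.elim _ _
    intro x
    have := DFunLike.congr_fun h x
    simpa using this
  have hSYα : S Yα = AddMonoidAlgebra.single (-α) 1 := by
    rw [hYα, hS_single, hsα]
  set Yneg : A := AddMonoidAlgebra.single (-α) 1 with hYnegdef
  have hYneg : Yα * Yneg = 1 := by
    rw [hYα, hYnegdef, AddMonoidAlgebra.single_mul_single, add_neg_cancel, mul_one]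
    rfl
  -- the defining relation in global, basis-free form
  have hA1 : ∀ x : A, (Yα - 1) * T x = (1 - q) • x + (q • Yα - 1) * S x := by
    intro x
    induction x using AddMonoidAlgebra.induction_linear with
    | zero => simp
    | add f g hf hg =>
        rw [map_add, map_add, mul_add, hf, hg, smul_add, mul_add]
        abel
    | single μ r =>
        show (Yα - 1) * T (AddMonoidAlgebra.single μ r)
          = (1 - q) • (AddMonoidAlgebra.single μ r : A)
            + (q • Yα - 1) * S (AddMonoidAlgebra.single μ r)
        have hr : (AddMonoidAlgebra.single μ r : A)
            = r • AddMonoidAlgebra.single μ 1 := by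
          rw [AddMonoidAlgebra.smul_single', mul_one]
        rw [hr, map_smul, map_smul, mul_smul_comm, mul_smul_comm, smul_comm (1 - q) r,
          ← smul_add]
        congr 1
        rw [hT μ, hS_single]
        have hmul : (q • Yα - 1) * AddMonoidAlgebra.single (s μ) (1 : k)
            = q • AddMonoidAlgebra.single (s μ + α) (1 : k)
              - AddMonoidAlgebra.single (s μ) 1 := by
          rw [sub_mul, one_mul, smul_mul_assoc, hYα, AddMonoidAlgebra.single_mul_single,
            one_mul, add_comm α (s μ)]
        rw [hmul]
        have hsμ : s μ = μ - c μ • α := rfl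
        rw [hsμ]
        module
  -- consequence: the relation for `S ∘ T`, with `Y_{-α}` eliminated
  have hA2 : ∀ x : A, (Yα - 1) * S (T x)
      = -((1 - q) • (Yα * S x)) - (q • (1 : A) - Yα) * x := by
    intro x
    have h1 : S ((Yα - 1) * T x) = (Yneg - 1) * S (T x) := by
      rw [map_mul, map_sub, map_one, hSYα]
    have h2 : S ((Yα - 1) * T x) = (1 - q) • S x + (q • Yneg - 1) * x := by
      rw [hA1 x, map_add, map_smul, map_mul, map_sub, map_smul, map_one, hSYα, hSS]
    have h3 : (Yneg - 1) * S (T x) = (1 - q) • S x + (q • Yneg - 1) * x := by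
      rw [← h1, h2]
    have h4 := congrArg (fun z => -(Yα * z)) h3
    simp only [Algebra.smul_def, map_sub, map_one] at h4 ⊢
    linear_combination h4 + (S (T x) - algebraMap k A q * x) * hYneg
  intro a
  -- cancel `(Yα - 1)` twice
  rw [← mul_cancel_left_mem_nonZeroDivisors hreg, ← mul_cancel_left_mem_nonZeroDivisors hreg]
  have e1 := hA1 a
  have e2 := hA1 (T a)
  have e3 := hA2 a
  simp only [Algebra.smul_def, map_sub, map_one] at e1 e2 e3 ⊢
  linear_combination (Yα - 1) * e2 + (algebraMap k A q * Yα - 1) * e3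
    + ((1 - algebraMap k A q) - (algebraMap k A q - 1) * (Yα - 1)) * e1
end
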